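/- A tree T has a 2-transitive partition of size k if and only if T contains a 2-complete minimum broadcast tree of order k (2-cmbt_k) as a subgraph. -/

import Mathlib

open SimpleGraph

universe u

def TwoTransPart {V : Type*} (G : SimpleGraph V) (k : ℕ) (P : Fin k → Set V) : Prop :=
  (∀ i, (P i).Nonempty) ∧ (∀ v, ∃! i, v ∈ P i) ∧
    ∀ i j : Fin k, i < j → ∀ v ∈ P j,
      ∃ u w, u ∈ P i ∧ w ∈ P i ∧ u ≠ w ∧ G.Adj u v ∧ G.Adj w v

/-- The 2-transitivity `Tr₂(G)`: the maximum size of a 2-transitive partition of `G`. -/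
noncomputable def tr2 {V : Type*} (G : SimpleGraph V) : ℕ :=
  sSup {k | ∃ P : Fin k → Set V, TwoTransPart G k P}

/-- `IsCmbt2 G r k` : `G`, rooted at `r`, is a 2-complete minimum broadcast tree of order `k`. -/
inductive IsCmbt2 : ∀ {V : Type u}, SimpleGraph V → V → ℕ → Prop
  | base {V : Type u} (G : SimpleGraph V) (r : V)
      (hV : ∀ v : V, v = r) (hE : ∀ u v : V, ¬ G.Adj u v) : IsCmbt2 G r 1
  | step {V : Type u} (G : SimpleGraph V) (r : V) (k : ℕ)
      (S : Fin k → Bool → Set V) (rt : (i : Fin k) → Bool → V)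
      (hrt : ∀ i b, rt i b ∈ S i b)
      (hpart : ∀ v : V, v ≠ r → ∃! p : Fin k × Bool, v ∈ S p.1 p.2)
      (hr : ∀ i b, r ∉ S i b)
      (hinj : ∀ i b i' b', rt i b = rt i' b' → i = i' ∧ b = b')
      (hadjr : ∀ v : V, G.Adj r v ↔ ∃ i b, v = rt i b)
      (hsep : ∀ u v : V, G.Adj u v → u ≠ r → v ≠ r → ∃ i b, u ∈ S i b ∧ v ∈ S i b)
      (hsub : ∀ i b, IsCmbt2 (G.induce (S i b)) ⟨rt i b, hrt i b⟩ ((i : ℕ) + 1)) :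
      IsCmbt2 G r (k + 1)

lemma cmbt_map : ∀ {V : Type u} {G : SimpleGraph V} {r : V} {k : ℕ},
    IsCmbt2 G r k → ∀ {V' : Type u} {G' : SimpleGraph V'} (e : G ≃g G') (r' : V'),
    e r = r' → IsCmbt2 G' r' k := by
  intro V G r k h
  induction h with
  | base G r hV hE =>
    rintro V' G' e r' rfl
    exact IsCmbt2.base G' (e r) (fun v => by rw [← e.apply_symm_apply v, hV (e.symm v)])
      (fun u v hadj => hE (e.symm u) (e.symm v) (by rw [← e.symm.map_adj_iff] at hadj; exact hadj))
  | step G r k S rt hrt hpart hr hinj hadjr hsep hsub ih =>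
    rintro V' G' e r' rfl
    refine IsCmbt2.step G' (e r) k (fun i b => e '' (S i b)) (fun i b => e (rt i b))
      (fun i b => Set.mem_image_of_mem e (hrt i b)) ?_ ?_ ?_ ?_ ?_ ?_
    · intro v hv
      obtain ⟨p, hp, hup⟩ := hpart (e.symm v) (fun hh => hv (by rw [← e.apply_symm_apply v, hh]))
      refine ⟨p, ⟨e.symm v, hp, by simp⟩, ?_⟩
      rintro q ⟨x, hx, rfl⟩
      exact hup q (by simpa using hx)
    · rintro i b ⟨x, hx, hex⟩
      exact hr i b (by rwa [e.injective hex] at hx)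
    · intro i b i' b' hh
      exact hinj i b i' b' (e.injective hh)
    · intro v
      rw [← e.apply_symm_apply v, e.map_adj_iff, hadjr]
      constructor
      · rintro ⟨i, b, hib⟩; exact ⟨i, b, by rw [hib]⟩
      · rintro ⟨i, b, hib⟩; exact ⟨i, b, e.injective (by simpa using hib)⟩
    · intro u v huv hu hv
      obtain ⟨i, b, h1, h2⟩ := hsep (e.symm u) (e.symm v)
        (by rw [← e.map_adj_iff]; simpa using huv)
        (fun hh => hu (by rw [← e.apply_symm_apply u, hh]))
        (fun hh => hv (by rw [← e.apply_symm_apply v, hh]))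
      exact ⟨i, b, ⟨_, h1, by simp⟩, ⟨_, h2, by simp⟩⟩
    · intro i b
      refine ih i b (G' := G'.induce ((fun i b => e '' (S i b)) i b))
        { toFun := fun a => ⟨e a, Set.mem_image_of_mem e a.2⟩,
          invFun := fun a => ⟨e.symm a, by
            obtain ⟨x, hx, hxe⟩ := a.2
            rw [← hxe]; simpa using hx⟩,
          left_inv := fun a => by ext; simp,
          right_inv := fun a => by ext; simp,
          map_rel_iff' := by intro a c; exact e.map_adj_iff } _ (Subtype.ext rfl)

lemma cmbt_label : ∀ {V : Type u} {G : SimpleGraph V} {r : V} {k : ℕ},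
    IsCmbt2 G r k →
    ∃ f : V → ℕ, f r = k - 1 ∧ (∀ v, f v < k) ∧
      ∀ v, ∀ j, j < f v → ∃ u w, f u = j ∧ f w = j ∧ u ≠ w ∧ G.Adj u v ∧ G.Adj w v := by
  intro V G r k h
  induction h with
  | base G r hV hE =>
    exact ⟨fun _ => 0, rfl, fun v => Nat.zero_lt_one, fun v j hj => absurd hj (Nat.not_lt_zero j)⟩
  | @step W G r k S rt hrt hpart hr hinj hadjr hsep hsub ih =>
    classical
    choose F hF1 hF2 hF3 using ih
    set f : W → ℕ := fun v => if h : v = r then k else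
      F (Classical.choose (hpart v h)).1 (Classical.choose (hpart v h)).2
        ⟨v, (Classical.choose_spec (hpart v h)).1⟩ with hfdef
    have hrne : ∀ i b, rt i b ≠ r := fun i b hh => hr i b (hh ▸ hrt i b)
    have hfmem : ∀ (v : W) (hv : v ≠ r) (i : Fin k) (b : Bool) (hm : v ∈ S i b),
        f v = F i b ⟨v, hm⟩ := by
      intro v hv i b hm
      have key : ∀ (p : Fin k × Bool) (hp1 : v ∈ S p.1 p.2),
          ((i, b) : Fin k × Bool) = p → F p.1 p.2 ⟨v, hp1⟩ = F i b ⟨v, hm⟩ := by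
        rintro p hp1 rfl; rfl
      simp only [hfdef, dif_neg hv]
      exact key _ _ ((Classical.choose_spec (hpart v hv)).2 (i, b) hm)
    have hfr : f r = k := by simp [hfdef]
    refine ⟨f, by simpa using hfr, ?_, ?_⟩
    · intro v
      by_cases hv : v = r
      · subst hv; rw [hfr]; omega
      · obtain ⟨⟨i, b⟩, hm, _⟩ := hpart v hv
        rw [hfmem v hv i b hm]
        have h2 := hF2 i b ⟨v, hm⟩
        have hik : (i : ℕ) < k := i.isLt
        omega
    · intro v j hj
      by_cases hv : v = r
      · subst hv
        rw [hfr] at hj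
        set i : Fin k := ⟨j, hj⟩ with hidef
        have hj1 : f (rt i true) = j := by
          rw [hfmem _ (hrne i true) i true (hrt i true)]
          have := hF1 i true
          simpa using this
        have hj2 : f (rt i false) = j := by
          rw [hfmem _ (hrne i false) i false (hrt i false)]
          have := hF1 i false
          simpa using this
        refine ⟨rt i true, rt i false, hj1, hj2, ?_, ?_, ?_⟩
        · exact fun hh => by simpa using (hinj i true i false hh).2
        · exact G.adj_symm ((hadjr _).mpr ⟨i, true, rfl⟩)
        · exact G.adj_symm ((hadjr _).mpr ⟨i, false, rfl⟩)
      · obtain ⟨⟨i, b⟩, hm, _⟩ := hpart v hv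
        rw [hfmem v hv i b hm] at hj
        obtain ⟨u', w', hu', hw', hne, ha1, ha2⟩ := hF3 i b ⟨v, hm⟩ j hj
        have hu'ne : (u' : W) ≠ r := fun hh => hr i b (hh ▸ u'.2)
        have hw'ne : (w' : W) ≠ r := fun hh => hr i b (hh ▸ w'.2)
        refine ⟨u', w', ?_, ?_, fun hh => hne (Subtype.ext hh), ha1, ha2⟩
        · rw [hfmem _ hu'ne i b u'.2]; exact hu'
        · rw [hfmem _ hw'ne i b w'.2]; exact hw'

lemma cmbt_to_part {V : Type u} (G : SimpleGraph V) {k : ℕ} (H : G.Subgraph) (r : H.verts)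
    (h : IsCmbt2 H.coe r k) : ∃ P : Fin k → Set V, TwoTransPart G k P := by
  classical
  have hk : 0 < k := by cases h <;> omega
  obtain ⟨f, hfr, hflt, hfp⟩ := cmbt_label h
  set g : V → Fin k := fun v => if h : v ∈ H.verts then ⟨f ⟨v, h⟩, hflt _⟩ else ⟨0, hk⟩
    with hgdef
  have hg : ∀ (u : H.verts), g ↑u = ⟨f u, hflt u⟩ := by
    intro u
    simp only [hgdef, dif_pos u.2]
  refine ⟨fun j => {v | g v = j}, ?_, ?_, ?_⟩
  · intro j
    rcases Nat.lt_or_ge (j : ℕ) (f r) with hj | hj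
    · obtain ⟨u, _, hu, _⟩ := hfp r j hj
      exact ⟨↑u, by rw [Set.mem_setOf_eq, hg u, Fin.ext_iff]; exact hu⟩
    · have : (j : ℕ) = f r := by have := j.isLt; omega
      exact ⟨↑r, by rw [Set.mem_setOf_eq, hg r, Fin.ext_iff]; exact this.symm⟩
  · exact fun v => ⟨g v, rfl, fun y hy => hy.symm⟩
  · intro i j hij v hv
    rw [Set.mem_setOf_eq] at hv
    have hvm : v ∈ H.verts := by
      by_contra hvm
      rw [hgdef] at hv
      simp only [dif_neg hvm] at hv
      rw [← hv] at hij
      exact absurd hij (by simp [Fin.lt_def])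
    rw [hg ⟨v, hvm⟩] at hv
    have hilt : (i : ℕ) < f ⟨v, hvm⟩ := by
      rw [← hv] at hij
      simpa [Fin.lt_def] using hij
    obtain ⟨u', w', hu', hw', hne, ha1, ha2⟩ := hfp ⟨v, hvm⟩ i hilt
    refine ⟨↑u', ↑w', ?_, ?_, fun hh => hne (Subtype.ext hh), ?_, ?_⟩
    · rw [Set.mem_setOf_eq, hg u', Fin.ext_iff]; exact hu'
    · rw [Set.mem_setOf_eq, hg w', Fin.ext_iff]; exact hw'
    · exact H.coe_adj_sub _ _ ha1
    · exact H.coe_adj_sub _ _ ha2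

lemma acyclic_not_reachable {V : Type u} {G : SimpleGraph V} (hac : G.IsAcyclic)
    {r : V} {D : Set V} (hrD : r ∉ D) {x y : ↥D}
    (hx : G.Adj r ↑x) (hy : G.Adj r ↑y) (hne : (x : V) ≠ ↑y)
    (hreach : (G.induce D).Reachable x y) : False := by
  classical
  obtain ⟨w0⟩ := hreach
  let hom : G.induce D →g G := ⟨Subtype.val, fun {a b} h => h⟩
  let w : G.Walk ↑x ↑y := w0.map hom
  have hrw : r ∉ w.support := by
    show r ∉ (w0.map hom).support
    rw [SimpleGraph.Walk.support_map]
    rintro hmem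
    obtain ⟨z, _, hz⟩ := List.mem_map.mp hmem
    exact hrD (hz ▸ z.2)
  let q := w.toPath
  have hrq : r ∉ q.val.support := fun hh => hrw (Walk.support_toPath_subset w hh)
  let p2 : G.Path r ↑y := ⟨Walk.cons hx q.val, q.2.cons hrq⟩
  have heq : Path.singleton hy = p2 := isAcyclic_iff_path_unique.mp hac _ _
  have hxs : (x : V) ∈ (Path.singleton hy).val.support := by
    rw [heq]
    simp only [Walk.support_cons, List.mem_cons, p2]
    exact Or.inr (q.val.start_mem_support)
  simp only [Path.singleton, Walk.support_cons, Walk.support_nil, List.mem_cons,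
    List.mem_singleton] at hxs
  rcases hxs with h1 | h1 | h1
  · exact hx.ne' h1
  · exact hne h1
  · exact (List.not_mem_nil h1)

lemma lemB : ∀ (k : ℕ) {V : Type u} (G : SimpleGraph V) (hac : G.IsAcyclic)
    (A : Set V) (c : V → ℕ) (r : V), r ∈ A → c r = k →
    (∀ a ∈ A, ∀ j, j < c a → j < k → ∃ u w, u ∈ A ∧ w ∈ A ∧ c u = j ∧ c w = j ∧ u ≠ w ∧
      G.Adj u a ∧ G.Adj w a) →
    ∃ H : G.Subgraph, H.verts ⊆ A ∧ ∃ hr : r ∈ H.verts, IsCmbt2 H.coe ⟨r, hr⟩ (k + 1) := by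
  intro k
  induction k using Nat.strong_induction_on with
  | _ k IH =>
  intro V G hac A c r hrA hcr hyp
  classical
  rcases Nat.eq_zero_or_pos k with hk0 | hkpos
  · subst hk0
    refine ⟨G.singletonSubgraph r, by simpa using hrA, by simp, ?_⟩
    refine IsCmbt2.base _ _ (fun v => Subtype.ext v.2) ?_
    intro u v h
    rw [Subgraph.coe_adj] at h
    simp only [singletonSubgraph_adj, Pi.bot_apply] at h
    exact h
  · -- children
    have hch : ∀ i : Fin k, ∃ u w, u ∈ A ∧ w ∈ A ∧ c u = i ∧ c w = i ∧ u ≠ w ∧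
        G.Adj u r ∧ G.Adj w r := fun i => hyp r hrA i (hcr ▸ i.isLt) i.isLt
    choose u1 u2 hu1A hu2A hcu1 hcu2 hune hadj1 hadj2 using hch
    set ch : Fin k → Bool → V := fun i b => if b then u1 i else u2 i with hchdef
    have chA : ∀ i b, ch i b ∈ A := by intro i b; cases b <;> simp [hchdef, hu1A, hu2A]
    have chc : ∀ i b, c (ch i b) = i := by intro i b; cases b <;> simp [hchdef, hcu1, hcu2]
    have chadj : ∀ i b, G.Adj (ch i b) r := by intro i b; cases b <;> simp [hchdef, hadj1, hadj2]
    have chner : ∀ i b, ch i b ≠ r := by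
      intro i b hh
      have h1 := chc i b
      rw [hh, hcr] at h1
      have h2 := i.isLt
      omega
    have chne : ∀ i b i' b', ch i b = ch i' b' → i = i' ∧ b = b' := by
      intro i b i' b' hh
      have hii : i = i' := by
        have h1 := chc i b; have h2 := chc i' b'
        rw [hh] at h1; exact Fin.ext (by omega)
      subst hii
      refine ⟨rfl, ?_⟩
      cases b <;> cases b'
      · rfl
      · exact absurd hh.symm (hune i)
      · exact absurd hh (hune i)
      · rfl
    set D : Set V := A \ {r} with hDdef
    have hrD : r ∉ D := by simp [hDdef]
    have chD : ∀ i b, ch i b ∈ D := fun i b => ⟨chA i b, chner i b⟩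
    set A' : Fin k → Bool → Set V := fun i b =>
      {x | ∃ hx : x ∈ D, (G.induce D).Reachable ⟨ch i b, chD i b⟩ ⟨x, hx⟩} with hA'def
    have chA' : ∀ i b, ch i b ∈ A' i b := fun i b => ⟨chD i b, Reachable.refl _⟩
    have hA'D : ∀ i b, A' i b ⊆ D := fun i b x hx => hx.1
    have hdisj : ∀ i b i' b' (x : V), x ∈ A' i b → x ∈ A' i' b' → i = i' ∧ b = b' := by
      intro i b i' b' x h1 h2
      by_contra hcon
      obtain ⟨hx1, hr1⟩ := h1
      obtain ⟨hx2, hr2⟩ := h2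
      have hxx : (⟨x, hx2⟩ : ↥D) = ⟨x, hx1⟩ := rfl
      rw [hxx] at hr2
      have hchne : ch i b ≠ ch i' b' := fun hh => hcon (chne _ _ _ _ hh)
      exact acyclic_not_reachable hac hrD ((chadj i b).symm) ((chadj i' b').symm)
        hchne (hr1.trans hr2.symm)
    -- recursive construction
    have hrec : ∀ (i : Fin k) (b : Bool), ∃ H : G.Subgraph, H.verts ⊆ A' i b ∧
        ∃ hr : ch i b ∈ H.verts, IsCmbt2 H.coe ⟨ch i b, hr⟩ ((i : ℕ) + 1) := by
      intro i b
      refine IH i.val i.isLt G hac (A' i b) c (ch i b) (chA' i b) (chc i b) ?_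
      intro a ha j hj1 hj2
      obtain ⟨haD, hreach⟩ := ha
      obtain ⟨u, w, huA, hwA, hcu, hcw, huw, hau, haw⟩ :=
        hyp a haD.1 j hj1 (lt_trans hj2 i.isLt)
      have huD : u ∈ D := ⟨huA, fun hh => by
        rw [Set.mem_singleton_iff] at hh; rw [hh, hcr] at hcu; omega⟩
      have hwD : w ∈ D := ⟨hwA, fun hh => by
        rw [Set.mem_singleton_iff] at hh; rw [hh, hcr] at hcw; omega⟩
      have hadjau : (G.induce D).Adj ⟨a, haD⟩ ⟨u, huD⟩ := hau.symm
      have hadjaw : (G.induce D).Adj ⟨a, haD⟩ ⟨w, hwD⟩ := haw.symm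
      exact ⟨u, w, ⟨huD, hreach.trans hadjau.reachable⟩, ⟨hwD, hreach.trans hadjaw.reachable⟩,
        hcu, hcw, huw, hau, haw⟩
    choose HH hHsub hHmem hHc using hrec
    have hHr : ∀ i b, r ∉ (HH i b).verts := fun i b hh => hrD (hA'D i b (hHsub i b hh))
    -- assemble
    set H : G.Subgraph :=
      { verts := insert r (⋃ i, ⋃ b, (HH i b).verts),
        Adj := fun x y => (∃ i b, (HH i b).Adj x y) ∨ (x = r ∧ ∃ i b, y = ch i b) ∨
          (y = r ∧ ∃ i b, x = ch i b),
        adj_sub := by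
          rintro x y (⟨i, b, h⟩ | ⟨rfl, i, b, rfl⟩ | ⟨rfl, i, b, rfl⟩)
          · exact (HH i b).adj_sub h
          · exact (chadj i b).symm
          · exact chadj i b,
        edge_vert := by
          rintro x y (⟨i, b, h⟩ | ⟨rfl, i, b, rfl⟩ | ⟨rfl, i, b, rfl⟩)
          · exact Set.mem_insert_of_mem _ (Set.mem_iUnion.mpr ⟨i, Set.mem_iUnion.mpr ⟨b, (HH i b).edge_vert h⟩⟩)
          · exact Set.mem_insert _ _
          · exact Set.mem_insert_of_mem _ (Set.mem_iUnion.mpr ⟨i, Set.mem_iUnion.mpr ⟨b, hHmem i b⟩⟩),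
        symm := by
          constructor
          rintro x y (⟨i, b, h⟩ | ⟨rfl, i, b, rfl⟩ | ⟨rfl, i, b, rfl⟩)
          · exact Or.inl ⟨i, b, (HH i b).adj_symm h⟩
          · exact Or.inr (Or.inr ⟨rfl, i, b, rfl⟩)
          · exact Or.inr (Or.inl ⟨rfl, i, b, rfl⟩) } with hHdef
    have hHverts : H.verts = insert r (⋃ i, ⋃ b, (HH i b).verts) := rfl
    have hHadj : ∀ x y, H.Adj x y ↔ ((∃ i b, (HH i b).Adj x y) ∨ (x = r ∧ ∃ i b, y = ch i b) ∨
          (y = r ∧ ∃ i b, x = ch i b)) := fun x y => Iff.rfl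
    have hchH : ∀ i b, ch i b ∈ H.verts := fun i b =>
      Set.mem_insert_of_mem _ (Set.mem_iUnion.mpr ⟨i, Set.mem_iUnion.mpr ⟨b, hHmem i b⟩⟩)
    have hHHv : ∀ i b, (HH i b).verts ⊆ H.verts := fun i b x hx =>
      Set.mem_insert_of_mem _ (Set.mem_iUnion.mpr ⟨i, Set.mem_iUnion.mpr ⟨b, hx⟩⟩)
    refine ⟨H, ?_, Set.mem_insert _ _, ?_⟩
    · rw [hHverts]
      rintro x (rfl | hx)
      · exact hrA
      · obtain ⟨i, hi⟩ := Set.mem_iUnion.mp hx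
        obtain ⟨b, hb⟩ := Set.mem_iUnion.mp hi
        exact (hA'D i b (hHsub i b hb)).1
    · rcases k with _ | K
      · omega
      refine IsCmbt2.step H.coe ⟨r, Set.mem_insert _ _⟩ (K + 1)
        (fun i b => (Subtype.val ⁻¹' (HH i b).verts : Set ↥H.verts))
        (fun i b => ⟨ch i b, hchH i b⟩)
        (fun i b => show (ch i b) ∈ (HH i b).verts from hHmem i b) ?_ ?_ ?_ ?_ ?_ ?_
      · -- hpart
        rintro ⟨v, hv⟩ hvne
        have hvr : v ≠ r := fun hh => hvne (Subtype.ext hh)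
        rcases hv with rfl | hv
        · exact absurd rfl hvr
        obtain ⟨i, hi⟩ := Set.mem_iUnion.mp hv
        obtain ⟨b, hb⟩ := Set.mem_iUnion.mp hi
        refine ⟨(i, b), hb, ?_⟩
        rintro ⟨i', b'⟩ hb'
        have := hdisj i' b' i b v (hHsub i' b' hb') (hHsub i b hb)
        simp only [Prod.mk.injEq]
        exact this
      · -- hr
        intro i b hh
        exact hHr i b hh
      · -- hinj
        intro i b i' b' hh
        exact chne i b i' b' (congrArg Subtype.val hh)
      · -- hadjr
        intro v
        rw [Subgraph.coe_adj]
        constructor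
        · rintro (⟨i, b, h⟩ | ⟨-, i, b, h2⟩ | ⟨h1, i, b, h2⟩)
          · exact absurd ((HH i b).edge_vert h) (hHr i b)
          · exact ⟨i, b, Subtype.ext h2⟩
          · exact absurd h2.symm (chner i b)
        · rintro ⟨i, b, rfl⟩
          exact Or.inr (Or.inl ⟨rfl, i, b, rfl⟩)
      · -- hsep
        rintro ⟨x, hx⟩ ⟨y, hy⟩ hadj hxr hyr
        rw [Subgraph.coe_adj] at hadj
        have hxr' : x ≠ r := fun hh => hxr (Subtype.ext hh)
        have hyr' : y ≠ r := fun hh => hyr (Subtype.ext hh)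
        rcases hadj with ⟨i, b, h⟩ | ⟨h1, -⟩ | ⟨h1, -⟩
        · exact ⟨i, b, (HH i b).edge_vert h, (HH i b).edge_vert h.symm⟩
        · exact absurd h1 hxr'
        · exact absurd h1 hyr'
      · -- hsub
        intro i b
        refine cmbt_map (hHc i b) (G' := H.coe.induce
          ((fun i b => (Subtype.val ⁻¹' (HH i b).verts : Set ↥H.verts)) i b))
          { toFun := fun x => ⟨⟨↑x, hHHv i b x.2⟩, x.2⟩,
            invFun := fun y => ⟨↑↑y, y.2⟩,
            left_inv := fun x => rfl,
            right_inv := fun y => Subtype.ext (Subtype.ext rfl),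
            map_rel_iff' := ?_ } _ (Subtype.ext (Subtype.ext rfl))
        intro a a'
        show H.Adj ↑a ↑a' ↔ (HH i b).coe.Adj a a'
        rw [Subgraph.coe_adj]
        constructor
        · rintro (⟨i', b', h⟩ | ⟨hh, -⟩ | ⟨hh, -⟩)
          · have m1 : (a : V) ∈ A' i' b' := hHsub i' b' ((HH i' b').edge_vert h)
            have m2 : (a : V) ∈ A' i b := hHsub i b a.2
            obtain ⟨rfl, rfl⟩ := hdisj i' b' i b ↑a m1 m2
            exact h
          · exact absurd hh (fun hh' => hrD (hA'D i b (hHsub i b (hh' ▸ a.2))))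
          · exact absurd hh (fun hh' => hrD (hA'D i b (hHsub i b (hh' ▸ a'.2))))
        · intro h
          exact Or.inl ⟨i, b, h⟩

theorem stmt11 {V : Type u} [Fintype V] (G : SimpleGraph V) (hT : G.IsTree) (k : ℕ) :
    (∃ P : Fin k → Set V, TwoTransPart G k P) ↔
      ∃ (H : G.Subgraph) (r : H.verts), IsCmbt2 H.coe r k := by
  constructor
  · rintro ⟨P, hP1, hP2, hP3⟩
    classical
    obtain ⟨v0⟩ := hT.isConnected.nonempty
    rcases Nat.eq_zero_or_pos k with rfl | hk
    · obtain ⟨i, -, -⟩ := hP2 v0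
      exact i.elim0
    set cF : V → Fin k := fun v => Classical.choose (hP2 v) with hcFdef
    have hmemc : ∀ v, v ∈ P (cF v) := fun v => (Classical.choose_spec (hP2 v)).1
    have hcuniq : ∀ v i, v ∈ P i → cF v = i := fun v i h =>
      ((Classical.choose_spec (hP2 v)).2 i h).symm
    set c : V → ℕ := fun v => (cF v).val with hcdef
    obtain ⟨r, hrP⟩ := hP1 ⟨k - 1, by omega⟩
    have hcr : c r = k - 1 := congrArg Fin.val (hcuniq r _ hrP)
    have hyp' : ∀ a ∈ (Set.univ : Set V), ∀ j, j < c a → j < k - 1 →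
        ∃ u w, u ∈ (Set.univ : Set V) ∧ w ∈ (Set.univ : Set V) ∧ c u = j ∧ c w = j ∧
          u ≠ w ∧ G.Adj u a ∧ G.Adj w a := by
      intro a _ j hj1 hj2
      have hj : (⟨j, by omega⟩ : Fin k) < cF a := by
        simpa [Fin.lt_def] using hj1
      obtain ⟨u, w, hu, hw, huw, h1, h2⟩ := hP3 ⟨j, by omega⟩ (cF a) hj a (hmemc a)
      exact ⟨u, w, trivial, trivial, congrArg Fin.val (hcuniq u _ hu),
        congrArg Fin.val (hcuniq w _ hw), huw, h1, h2⟩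
    obtain ⟨H, -, hrH, hc⟩ := lemB (k - 1) G hT.IsAcyclic Set.univ c r (Set.mem_univ r) hcr hyp'
    refine ⟨H, ⟨r, hrH⟩, ?_⟩
    have hkk : k - 1 + 1 = k := by omega
    exact hkk ▸ hc
  · rintro ⟨H, r, hc⟩
    exact cmbt_to_part G H r hc
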